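/- Let n, m be positive integers, Q ∈ ℝ^{n×m}, and let r ∈ ℝ^n, c ∈ ℝ^m be vectors with nonnegative entries satisfying ‖r‖₁ = ‖c‖₁. Then min_{X ∈ U(r,c)} ⟨X, Q⟩ = sup { Σ_{i∈[n]} r_i α_i + Σ_{j∈[m]} c_j β_j : α ∈ ℝ^n, β ∈ ℝ^m, α_i + β_j ≤ Q_{ij} for all i ∈ [n], j ∈ [m] }, and the minimum on the left-hand side is attained. -/

import Mathlib

open Finset
open scoped InnerProductSpace

section
variable {n m : ℕ} (Q : Matrix (Fin n) (Fin m) ℝ)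

/-- The map sending `(x, s)` to `(row sums of x, column sums of x, ⟨x,Q⟩ + s)`. -/
noncomputable def otPsi (x : Matrix (Fin n) (Fin m) ℝ) (s : ℝ) :
    EuclideanSpace ℝ (Fin n ⊕ Fin m ⊕ Unit) :=
  (WithLp.equiv 2 _).symm
    (Sum.elim (fun i => ∑ j, x i j)
      (Sum.elim (fun j => ∑ i, x i j) (fun _ => (∑ i, ∑ j, x i j * Q i j) + s)))

@[simp] lemma otPsi_inl (x s i) : otPsi Q x s (Sum.inl i) = ∑ j, x i j := rfl
@[simp] lemma otPsi_inrl (x s j) : otPsi Q x s (Sum.inr (Sum.inl j)) = ∑ i, x i j := rfl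
@[simp] lemma otPsi_inrr (x s u) :
    otPsi Q x s (Sum.inr (Sum.inr u)) = (∑ i, ∑ j, x i j * Q i j) + s := rfl

lemma coord_le_norm {ι : Type*} [Fintype ι] [DecidableEq ι] (y : EuclideanSpace ℝ ι) (κ : ι) : |y κ| ≤ ‖y‖ := by
  have h := abs_real_inner_le_norm (EuclideanSpace.single κ (1:ℝ)) y
  simpa [EuclideanSpace.inner_single_left] using h

end

section
variable {n m : ℕ} (Q : Matrix (Fin n) (Fin m) ℝ)

lemma otPsi_add (x x' : Matrix (Fin n) (Fin m) ℝ) (s s' : ℝ) :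
    otPsi Q (x + x') (s + s') = otPsi Q x s + otPsi Q x' s' := by
  ext κ
  rcases κ with i | j | u <;>
    simp [otPsi, Finset.sum_add_distrib, add_mul, Matrix.add_apply] <;> ring

lemma otPsi_smul (t : ℝ) (x : Matrix (Fin n) (Fin m) ℝ) (s : ℝ) :
    otPsi Q (t • x) (t * s) = t • otPsi Q x s := by
  ext κ
  rcases κ with i | j | u <;>
    simp [otPsi, Finset.mul_sum, mul_assoc, Matrix.smul_apply, smul_eq_mul] <;> ring_nf <;>
    simp [Finset.mul_sum, mul_assoc, mul_comm, mul_left_comm]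

lemma otPsi_continuous : Continuous fun p : Matrix (Fin n) (Fin m) ℝ × ℝ => otPsi Q p.1 p.2 := by
  unfold otPsi
  refine Continuous.comp ?_ ?_
  · exact PiLp.continuous_toLp 2 _
  · refine continuous_pi fun κ => ?_
    rcases κ with i | j | u
    · simpa using (continuous_finset_sum (univ : Finset (Fin m))
        fun j _ => (continuous_fst.matrix_elem i j))
    · simpa using (continuous_finset_sum (univ : Finset (Fin n))
        fun i _ => (continuous_fst.matrix_elem i j))
    · simp only [Sum.elim_inr]
      exact ((continuous_finset_sum _ fun i _ => continuous_finset_sum _ fun j _ =>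
        ((continuous_fst.matrix_elem i j).mul
          continuous_const))).add continuous_snd

end

section
variable {n m : ℕ} (Q : Matrix (Fin n) (Fin m) ℝ)

lemma otCone_isClosed :
    IsClosed {z : EuclideanSpace ℝ (Fin n ⊕ Fin m ⊕ Unit) |
      ∃ x s, (∀ i j, 0 ≤ x i j) ∧ 0 ≤ s ∧ z = otPsi Q x s} := by
  refine isClosed_of_closure_subset fun y hy => ?_
  rw [mem_closure_iff_seq_limit] at hy
  obtain ⟨u, hu, hlim⟩ := hy
  choose x s hx hs hux using hu
  -- bound on the norms of the sequence
  obtain ⟨B, hB⟩ := hlim.norm.bddAbove_range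
  have hB' : ∀ k, ‖u k‖ ≤ B := fun k => hB ⟨k, rfl⟩
  have hB0 : (0:ℝ) ≤ B := le_trans (norm_nonneg _) (hB' 0)
  -- entrywise bound on x
  have hxB : ∀ k i j, x k i j ≤ B := by
    intro k i j
    have h1 : x k i j ≤ ∑ j', x k i j' :=
      Finset.single_le_sum (fun j' _ => hx k i j') (Finset.mem_univ j)
    have h2 : ∑ j', x k i j' = u k (Sum.inl i) := by rw [hux k]; simp
    have h3 : |u k (Sum.inl i)| ≤ ‖u k‖ := coord_le_norm _ _
    calc x k i j ≤ ∑ j', x k i j' := h1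
      _ ≤ |u k (Sum.inl i)| := by rw [h2]; exact le_abs_self _
      _ ≤ B := h3.trans (hB' k)
  -- bound on s
  set M : ℝ := ∑ i, ∑ j, |Q i j| with hM
  have hsB : ∀ k, s k ≤ B + B * M := by
    intro k
    have h2 : (∑ i, ∑ j, x k i j * Q i j) + s k = u k (Sum.inr (Sum.inr ())) := by
      rw [hux k]; simp
    have h3 : |u k (Sum.inr (Sum.inr ()))| ≤ B := (coord_le_norm _ _).trans (hB' k)
    have h4 : -(B * M) ≤ ∑ i, ∑ j, x k i j * Q i j := by
      have key : ∀ i j, -(B * |Q i j|) ≤ x k i j * Q i j := by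
        intro i j
        have habs : |x k i j * Q i j| ≤ B * |Q i j| := by
          rw [abs_mul, abs_of_nonneg (hx k i j)]
          exact mul_le_mul_of_nonneg_right (hxB k i j) (abs_nonneg _)
        linarith [neg_abs_le (x k i j * Q i j)]
      calc -(B * M) = ∑ i, ∑ j, -(B * |Q i j|) := by
            simp [hM, Finset.mul_sum]
        _ ≤ ∑ i, ∑ j, x k i j * Q i j :=
            Finset.sum_le_sum fun i _ => Finset.sum_le_sum fun j _ => key i j
    have h5 : s k = u k (Sum.inr (Sum.inr ())) - ∑ i, ∑ j, x k i j * Q i j := by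
      rw [← h2]; ring
    rw [h5]
    have := abs_le.1 h3
    linarith
  -- compactness
  have hcomp : IsCompact (Set.Icc ((fun _ _ => 0 : Fin n → Fin m → ℝ), (0:ℝ))
      ((fun _ _ => B : Fin n → Fin m → ℝ), B + B * M)) := isCompact_Icc
  have hmem : ∀ k, ((x k, s k) : (Fin n → Fin m → ℝ) × ℝ) ∈
      Set.Icc ((fun _ _ => 0 : Fin n → Fin m → ℝ), (0:ℝ)) ((fun _ _ => B), B + B * M) := by
    intro k
    constructor
    · exact ⟨fun i => fun j => hx k i j, hs k⟩
    · exact ⟨fun i => fun j => hxB k i j, hsB k⟩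
  obtain ⟨⟨xl, sl⟩, hmeml, φ, hφ, hconv⟩ := hcomp.tendsto_subseq hmem
  refine ⟨Matrix.of xl, sl, fun i j => hmeml.1.1 i j, hmeml.1.2, ?_⟩
  have h1 : Filter.Tendsto (fun k => otPsi Q (x (φ k)) (s (φ k))) Filter.atTop
      (nhds (otPsi Q (Matrix.of xl) sl)) := by
    have := ((otPsi_continuous Q).tendsto ((Matrix.of xl : Matrix (Fin n) (Fin m) ℝ), sl)).comp hconv
    exact this
  have h2 : Filter.Tendsto (fun k => u (φ k)) Filter.atTop (nhds y) :=
    hlim.comp hφ.tendsto_atTop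
  have h3 : (fun k => u (φ k)) = fun k => otPsi Q (x (φ k)) (s (φ k)) := by
    funext k; exact hux (φ k)
  rw [h3] at h2
  exact tendsto_nhds_unique h2 h1

end

section
variable {n m : ℕ}

lemma sum_split (X : Matrix (Fin n) (Fin m) ℝ) (α : Fin n → ℝ) (β : Fin m → ℝ)
    (r : Fin n → ℝ) (c : Fin m → ℝ)
    (hX1 : ∀ i, ∑ j, X i j = r i) (hX2 : ∀ j, ∑ i, X i j = c j) :
    ∑ i, r i * α i + ∑ j, c j * β j = ∑ i, ∑ j, X i j * (α i + β j) := by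
  have h1 : ∑ i, r i * α i = ∑ i, ∑ j, X i j * α i := by
    refine Finset.sum_congr rfl fun i _ => ?_
    rw [← hX1 i, Finset.sum_mul]
  have h2 : ∑ j, c j * β j = ∑ j, ∑ i, X i j * β j := by
    refine Finset.sum_congr rfl fun j _ => ?_
    rw [← hX2 j, Finset.sum_mul]
  rw [h1, h2, Finset.sum_comm (s := Finset.univ) (t := Finset.univ) (f := fun (j : Fin m) (i : Fin n) => X i j * β j)]
  rw [← Finset.sum_add_distrib]
  refine Finset.sum_congr rfl fun i _ => ?_
  rw [← Finset.sum_add_distrib]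
  refine Finset.sum_congr rfl fun j _ => ?_
  ring

/-- inner product on our Euclidean space, coordinatewise. -/
lemma inner_sum_formula (z w : EuclideanSpace ℝ (Fin n ⊕ Fin m ⊕ Unit)) :
    ⟪z, w⟫_ℝ = ∑ i, z (Sum.inl i) * w (Sum.inl i) +
      (∑ j, z (Sum.inr (Sum.inl j)) * w (Sum.inr (Sum.inl j)) +
        z (Sum.inr (Sum.inr ())) * w (Sum.inr (Sum.inr ()))) := by
  simp [PiLp.inner_apply, RCLike.inner_apply, Fintype.sum_sum_type, mul_comm]

end

section
variable {n m : ℕ}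

lemma exists_dual_gt (hn : 0 < n) (hm : 0 < m)
    (Q : Matrix (Fin n) (Fin m) ℝ) (r : Fin n → ℝ) (c : Fin m → ℝ)
    (X0 : Matrix (Fin n) (Fin m) ℝ) (hX00 : ∀ i j, 0 ≤ X0 i j)
    (hX0r : ∀ i, ∑ j, X0 i j = r i) (hX0c : ∀ j, ∑ i, X0 i j = c j)
    (μ : ℝ)
    (hlb : ∀ x : Matrix (Fin n) (Fin m) ℝ, (∀ i j, 0 ≤ x i j) →
      (∀ i, ∑ j, x i j = r i) → (∀ j, ∑ i, x i j = c j) → μ ≤ ∑ i, ∑ j, x i j * Q i j)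
    (ε : ℝ) (hε : 0 < ε) :
    ∃ (α : Fin n → ℝ) (β : Fin m → ℝ), (∀ i j, α i + β j ≤ Q i j) ∧
      μ - ε < ∑ i, r i * α i + ∑ j, c j * β j := by
  -- the cone
  set K : ConvexCone ℝ (EuclideanSpace ℝ (Fin n ⊕ Fin m ⊕ Unit)) :=
    { carrier := {z | ∃ x s, (∀ i j, 0 ≤ x i j) ∧ 0 ≤ s ∧ z = otPsi Q x s}
      smul_mem' := by
        rintro t ht z ⟨x, s, hx, hs, rfl⟩
        exact ⟨t • x, t * s, fun i j => mul_nonneg ht.le (hx i j),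
          mul_nonneg ht.le hs, (otPsi_smul Q t x s).symm⟩
      add_mem' := by
        rintro z ⟨x, s, hx, hs, rfl⟩ z' ⟨x', s', hx', hs', rfl⟩
        exact ⟨x + x', s + s', fun i j => add_nonneg (hx i j) (hx' i j),
          add_nonneg hs hs', (otPsi_add Q x x' s s').symm⟩ } with hK
  have hKne : (K : Set (EuclideanSpace ℝ (Fin n ⊕ Fin m ⊕ Unit))).Nonempty :=
    ⟨otPsi Q 0 0, 0, 0, fun i j => le_refl 0, le_refl 0, rfl⟩
  have hKcl : IsClosed (K : Set (EuclideanSpace ℝ (Fin n ⊕ Fin m ⊕ Unit))) := otCone_isClosed Q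
  -- the point to separate
  set b : EuclideanSpace ℝ (Fin n ⊕ Fin m ⊕ Unit) :=
    (WithLp.equiv 2 _).symm (Sum.elim r (Sum.elim c (fun _ => μ - ε))) with hb
  have hbl : ∀ i, b (Sum.inl i) = r i := fun i => rfl
  have hbrl : ∀ j, b (Sum.inr (Sum.inl j)) = c j := fun j => rfl
  have hbrr : b (Sum.inr (Sum.inr ())) = μ - ε := rfl
  have hdisj : b ∉ K := by
    rintro ⟨x, s, hx, hs, hb'⟩
    have hrow : ∀ i, ∑ j, x i j = r i := fun i =>
      (congrArg (fun z => z (Sum.inl i)) hb').symm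
    have hcol : ∀ j, ∑ i, x i j = c j := fun j =>
      (congrArg (fun z => z (Sum.inr (Sum.inl j))) hb').symm
    have hlast : μ - ε = (∑ i, ∑ j, x i j * Q i j) + s :=
      congrArg (fun z => z (Sum.inr (Sum.inr ()))) hb'
    have := hlb x hx hrow hcol
    linarith
  obtain ⟨y, hy1, hy2⟩ :=
    ProperCone.hyperplane_separation' (C :=
      { carrier := (K : Set (EuclideanSpace ℝ (Fin n ⊕ Fin m ⊕ Unit)))
        add_mem' := fun ha hb => K.add_mem ha hb
        zero_mem' := ⟨0, 0, fun i j => le_refl 0, le_refl 0, by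
          ext κ; rcases κ with i | j | u <;> simp⟩
        smul_mem' := by
          rintro t z ⟨x, s, hx, hs, rfl⟩
          exact ⟨(t : ℝ) • x, (t : ℝ) * s, fun i j => mul_nonneg t.2 (hx i j),
            mul_nonneg t.2 hs, (otPsi_smul Q t x s).symm⟩
        isClosed' := hKcl }) hdisj
  set A : Fin n → ℝ := fun i => y (Sum.inl i) with hA
  set Bv : Fin m → ℝ := fun j => y (Sum.inr (Sum.inl j)) with hBv
  set t : ℝ := y (Sum.inr (Sum.inr ())) with ht
  -- t ≥ 0 from the generator (0, 1)
  have ht0 : 0 ≤ t := by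
    have h := hy1 (otPsi Q 0 1) ⟨0, 1, fun i j => le_refl 0, zero_le_one, rfl⟩
    rw [inner_sum_formula] at h
    simpa [otPsi] using h
  -- generator inequalities
  have hgen : ∀ i j, 0 ≤ A i + Bv j + Q i j * t := by
    intro i j
    set e : Matrix (Fin n) (Fin m) ℝ :=
      fun a b => (if a = i then (1:ℝ) else 0) * (if b = j then (1:ℝ) else 0) with he
    have hmem : otPsi Q e 0 ∈ K :=
      ⟨e, 0, fun a b => by positivity, le_refl 0, rfl⟩
    have h := hy1 _ hmem
    rw [inner_sum_formula] at h
    have hrow : ∀ a, otPsi Q e 0 (Sum.inl a) = if a = i then 1 else 0 := by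
      intro a; simp [otPsi, he, ← Finset.mul_sum]
    have hcol : ∀ b, otPsi Q e 0 (Sum.inr (Sum.inl b)) = if b = j then 1 else 0 := by
      intro b; simp [otPsi, he, ← Finset.sum_mul, mul_comm]
    have hlast : otPsi Q e 0 (Sum.inr (Sum.inr ())) = Q i j := by
      simp [otPsi, he, ite_and, mul_assoc]
    rw [hlast] at h
    simp only [hrow, hcol, ite_mul, one_mul, zero_mul] at h
    have h' : 0 ≤ y (Sum.inl i) + (y (Sum.inr (Sum.inl j)) + Q i j * t) := by simpa using h
    show 0 ≤ y (Sum.inl i) + y (Sum.inr (Sum.inl j)) + Q i j * t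
    linarith
  -- the separating inequality
  have hsep : ∑ i, A i * r i + (∑ j, Bv j * c j + t * (μ - ε)) < 0 := by
    have := hy2
    rw [real_inner_comm, inner_sum_formula] at this
    simpa [hbl, hbrl, hbrr, ← hA, ← hBv, ← ht] using this
  rcases eq_or_lt_of_le ht0 with htz | htpos
  · -- t = 0 : contradiction with feasibility of X0
    exfalso
    have hfeq : ∑ i, r i * A i + ∑ j, c j * Bv j = ∑ i, ∑ j, X0 i j * (A i + Bv j) :=
      sum_split X0 A Bv r c hX0r hX0c
    have hnn : 0 ≤ ∑ i, ∑ j, X0 i j * (A i + Bv j) := by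
      refine Finset.sum_nonneg fun i _ => Finset.sum_nonneg fun j _ => ?_
      have := hgen i j
      rw [← htz] at this
      exact mul_nonneg (hX00 i j) (by linarith)
    have h1 : ∑ i, A i * r i = ∑ i, r i * A i := by
      exact Finset.sum_congr rfl fun i _ => mul_comm _ _
    have h2 : ∑ j, Bv j * c j = ∑ j, c j * Bv j := by
      exact Finset.sum_congr rfl fun j _ => mul_comm _ _
    rw [h1, h2, ← htz] at hsep
    rw [← hfeq] at hnn
    linarith
  · -- t > 0 : build the dual solution
    refine ⟨fun i => -A i / t, fun j => -Bv j / t, fun i j => ?_, ?_⟩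
    · rw [← add_div, div_le_iff₀ htpos]
      have := hgen i j
      nlinarith
    · have hval : ∑ i, r i * (-A i / t) + ∑ j, c j * (-Bv j / t) =
          -(∑ i, A i * r i + ∑ j, Bv j * c j) / t := by
        calc ∑ i, r i * (-A i / t) + ∑ j, c j * (-Bv j / t)
            = ∑ i, (A i * r i) * (-1/t) + ∑ j, (Bv j * c j) * (-1/t) := by
              congr 1 <;> exact Finset.sum_congr rfl fun k _ => by ring
          _ = (∑ i, A i * r i) * (-1/t) + (∑ j, Bv j * c j) * (-1/t) := by
              rw [← Finset.sum_mul, ← Finset.sum_mul]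
          _ = -(∑ i, A i * r i + ∑ j, Bv j * c j) / t := by ring
      rw [hval, lt_div_iff₀ htpos]
      nlinarith

end

theorem stmt_10 (n m : ℕ) (hn : 0 < n) (hm : 0 < m)
    (Q : Matrix (Fin n) (Fin m) ℝ) (r : Fin n → ℝ) (c : Fin m → ℝ)
    (hr : ∀ i, 0 ≤ r i) (hc : ∀ j, 0 ≤ c j)
    (hl1 : ∑ i, |r i| = ∑ j, |c j|) :
    IsLeast {v : ℝ | ∃ X : Matrix (Fin n) (Fin m) ℝ,
        (∀ i j, 0 ≤ X i j) ∧ (∀ i, ∑ j, X i j = r i) ∧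
        (∀ j, ∑ i, X i j = c j) ∧ v = ∑ i, ∑ j, X i j * Q i j}
      (sSup {d : ℝ | ∃ (α : Fin n → ℝ) (β : Fin m → ℝ),
        (∀ i j, α i + β j ≤ Q i j) ∧
        d = ∑ i, r i * α i + ∑ j, c j * β j}) := by
  have hsum : ∑ i, r i = ∑ j, c j := by
    have h1 : ∑ i, |r i| = ∑ i, r i := Finset.sum_congr rfl fun i _ => abs_of_nonneg (hr i)
    have h2 : ∑ j, |c j| = ∑ j, c j := Finset.sum_congr rfl fun j _ => abs_of_nonneg (hc j)
    rw [← h1, ← h2]; exact hl1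
  -- a feasible transportation plan
  obtain ⟨X0, hX00, hX0r, hX0c⟩ : ∃ X0 : Matrix (Fin n) (Fin m) ℝ,
      (∀ i j, 0 ≤ X0 i j) ∧ (∀ i, ∑ j, X0 i j = r i) ∧ (∀ j, ∑ i, X0 i j = c j) := by
    by_cases hT : ∑ i, r i = 0
    · have hr0 : ∀ i, r i = 0 := fun i =>
        (Finset.sum_eq_zero_iff_of_nonneg fun i _ => hr i).1 hT i (Finset.mem_univ i)
      have hc0 : ∀ j, c j = 0 := fun j =>
        (Finset.sum_eq_zero_iff_of_nonneg fun j _ => hc j).1 (hsum ▸ hT) j (Finset.mem_univ j)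
      exact ⟨0, by simp, fun i => by simp [hr0 i], fun j => by simp [hc0 j]⟩
    · have hTpos : 0 < ∑ i, r i :=
        lt_of_le_of_ne (Finset.sum_nonneg fun i _ => hr i) (Ne.symm hT)
      refine ⟨Matrix.of fun i j => r i * c j / (∑ i', r i'),
        fun i j => div_nonneg (mul_nonneg (hr i) (hc j)) hTpos.le, ?_, ?_⟩
      · intro i
        show ∑ j, r i * c j / (∑ i', r i') = r i
        rw [← Finset.sum_div, ← Finset.mul_sum, ← hsum]
        field_simp
      · intro j
        show ∑ i, r i * c j / (∑ i', r i') = c j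
        rw [← Finset.sum_div, ← Finset.sum_mul]
        field_simp
  -- the feasible region, as a set of functions
  set P : Set (Fin n → Fin m → ℝ) :=
    {X | (∀ i j, 0 ≤ X i j) ∧ (∀ i, ∑ j, X i j = r i) ∧ (∀ j, ∑ i, X i j = c j)} with hP
  have hPclosed : IsClosed P := by
    have hrep : P = (⋂ (i) (j), {X : Fin n → Fin m → ℝ | 0 ≤ X i j}) ∩
        ((⋂ i, {X : Fin n → Fin m → ℝ | ∑ j, X i j = r i}) ∩
          (⋂ j, {X : Fin n → Fin m → ℝ | ∑ i, X i j = c j})) := by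
      ext X
      simp only [hP, Set.mem_setOf_eq, Set.mem_inter_iff, Set.mem_iInter]
    rw [hrep]
    refine IsClosed.inter ?_ (IsClosed.inter ?_ ?_)
    · exact isClosed_iInter fun i => isClosed_iInter fun j =>
        isClosed_le continuous_const ((continuous_apply j).comp (continuous_apply i))
    · exact isClosed_iInter fun i => isClosed_eq
        (continuous_finset_sum _ fun j _ => (continuous_apply j).comp (continuous_apply i))
        continuous_const
    · exact isClosed_iInter fun j => isClosed_eq
        (continuous_finset_sum _ fun i _ => (continuous_apply j).comp (continuous_apply i))
        continuous_const
  have hPsub : P ⊆ Set.Icc (fun _ _ => 0) (fun _ _ => ∑ i, r i) := by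
    rintro X ⟨h1, h2, h3⟩
    constructor
    · intro i j; exact h1 i j
    · intro i j
      calc X i j ≤ ∑ j', X i j' :=
            Finset.single_le_sum (fun j' _ => h1 i j') (Finset.mem_univ j)
        _ = r i := h2 i
        _ ≤ ∑ i', r i' := Finset.single_le_sum (fun i' _ => hr i') (Finset.mem_univ i)
  have hPcpt : IsCompact P := isCompact_Icc.of_isClosed_subset hPclosed hPsub
  have hPne : P.Nonempty := ⟨X0, hX00, hX0r, hX0c⟩
  set g : (Fin n → Fin m → ℝ) → ℝ := fun X => ∑ i, ∑ j, X i j * Q i j with hg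
  have hgcont : Continuous g := continuous_finset_sum _ fun i _ =>
    continuous_finset_sum _ fun j _ =>
      (continuous_apply_apply i j).mul continuous_const
  obtain ⟨Xm, hXmP, hXmmin⟩ := hPcpt.exists_isMinOn hPne hgcont.continuousOn
  have hXmin : ∀ X ∈ P, g Xm ≤ g X := fun X hX => isMinOn_iff.mp hXmmin X hX
  -- weak duality
  have hweak : ∀ d ∈ {d : ℝ | ∃ (α : Fin n → ℝ) (β : Fin m → ℝ),
      (∀ i j, α i + β j ≤ Q i j) ∧ d = ∑ i, r i * α i + ∑ j, c j * β j}, d ≤ g Xm := by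
    rintro d ⟨α, β, hfeas, rfl⟩
    have hsplit := sum_split Xm α β r c hXmP.2.1 hXmP.2.2
    rw [hsplit]
    refine Finset.sum_le_sum fun i _ => Finset.sum_le_sum fun j _ => ?_
    exact mul_le_mul_of_nonneg_left (hfeas i j) (hXmP.1 i j)
  have hDne : ∃ d, d ∈ {d : ℝ | ∃ (α : Fin n → ℝ) (β : Fin m → ℝ),
      (∀ i j, α i + β j ≤ Q i j) ∧ d = ∑ i, r i * α i + ∑ j, c j * β j} := by
    have hne : Nonempty (Fin n) := ⟨⟨0, hn⟩⟩
    refine ⟨_, ⟨fun _ => 0, fun j => Finset.univ.inf' Finset.univ_nonempty fun i => Q i j,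
      fun i j => ?_, rfl⟩⟩
    rw [zero_add]
    exact Finset.inf'_le _ (Finset.mem_univ i)
  have hbdd : BddAbove {d : ℝ | ∃ (α : Fin n → ℝ) (β : Fin m → ℝ),
      (∀ i j, α i + β j ≤ Q i j) ∧ d = ∑ i, r i * α i + ∑ j, c j * β j} := ⟨g Xm, hweak⟩
  have hsupeq : sSup {d : ℝ | ∃ (α : Fin n → ℝ) (β : Fin m → ℝ),
      (∀ i j, α i + β j ≤ Q i j) ∧ d = ∑ i, r i * α i + ∑ j, c j * β j} = g Xm := by
    refine le_antisymm (csSup_le hDne hweak) ?_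
    by_contra hlt
    push_neg at hlt
    obtain ⟨α, β, hfeas, hgt⟩ := exists_dual_gt hn hm Q r c X0 hX00 hX0r hX0c (g Xm)
      (fun x hx h1 h2 => hXmin x ⟨hx, h1, h2⟩) (g Xm - sSup _) (by linarith)
    have hle : ∑ i, r i * α i + ∑ j, c j * β j ≤ sSup {d : ℝ | ∃ (α : Fin n → ℝ) (β : Fin m → ℝ),
        (∀ i j, α i + β j ≤ Q i j) ∧ d = ∑ i, r i * α i + ∑ j, c j * β j} :=
      le_csSup hbdd ⟨α, β, hfeas, rfl⟩
    linarith
  rw [hsupeq]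
  constructor
  · exact ⟨Matrix.of Xm, hXmP.1, hXmP.2.1, hXmP.2.2, rfl⟩
  · rintro v ⟨X, h1, h2, h3, rfl⟩
    exact hXmin X ⟨h1, h2, h3⟩
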